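/- Suppose F, G ⊆ 2^[n] are initial families that are cross-intersecting (F ∩ G ≠ ∅ for all F ∈ F, G ∈ G). Then the subfamilies F(\bar{1}) and G(\bar{1}) of sets avoiding the element 1 are cross 2-intersecting: |F ∩ G| ≥ 2 for all F ∈ F(\bar{1}), G ∈ G(\bar{1}). -/

import Mathlib

def prec (A B : Finset ℕ) : Prop :=
  List.Forall₂ (· ≤ ·) (A.sort (· ≤ ·)) (B.sort (· ≤ ·))

private lemma listLem : ∀ (l l' : List ℕ), List.Sublist l' l → l.Pairwise (· ≤ ·) →
    l.length = l'.length + 1 → List.Forall₂ (· ≤ ·) l' l.tail := by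
  intro l
  induction l with
  | nil => intro l' h _ hl; simp at hl
  | cons a t ih =>
    intro l' h hs hl
    cases h with
    | cons _ h' =>
      have : l' = t := h'.eq_of_length (by simpa using hl.symm)
      subst this
      simpa using List.forall₂_same.2 fun x _ => le_refl x
    | cons_cons t' h' =>
      rename_i t'2
      simp only [List.length_cons, Nat.add_right_cancel_iff] at hl
      cases t with
      | nil => simp at hl
      | cons b t'' =>
        have hab : a ≤ b := (List.pairwise_cons.1 hs).1 b (by simp)
        have := ih t'2 h' (List.pairwise_cons.1 hs).2 hl
        simpa using List.Forall₂.cons hab this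

theorem stmt_6 (n : ℕ) (F G : Finset (Finset ℕ))
    (hFsub : ∀ A ∈ F, A ⊆ Finset.Icc 1 n) (hGsub : ∀ B ∈ G, B ⊆ Finset.Icc 1 n)
    (hFinit : ∀ A B : Finset ℕ, A ⊆ Finset.Icc 1 n → prec A B → B ∈ F → A ∈ F)
    (hGinit : ∀ A B : Finset ℕ, A ⊆ Finset.Icc 1 n → prec A B → B ∈ G → A ∈ G)
    (hcross : ∀ A ∈ F, ∀ B ∈ G, (A ∩ B).Nonempty) :
    ∀ A ∈ F, 1 ∉ A → ∀ B ∈ G, 1 ∉ B → 2 ≤ (A ∩ B).card := by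
  intro A hA h1A B hB h1B
  by_contra hlt
  push_neg at hlt
  obtain ⟨x, hx⟩ := hcross A hA B hB
  have hAB : A ∩ B = {x} := by
    apply Finset.eq_singleton_iff_unique_mem.2
    refine ⟨hx, fun y hy => ?_⟩
    by_contra hne
    exact absurd (Finset.one_lt_card.2 ⟨y, hy, x, hx, hne⟩) (by omega)
  have hxA : x ∈ A := (Finset.mem_inter.1 hx).1
  have hxB : x ∈ B := (Finset.mem_inter.1 hx).2
  -- elements of A are ≥ 2 (since 1 ∉ A, A ⊆ Icc 1 n)
  have hge2 : ∀ a ∈ A, 2 ≤ a := by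
    intro a ha
    have h1 := (Finset.mem_Icc.1 (hFsub A hA ha)).1
    by_contra h
    push_neg at h
    have : a = 1 := by omega
    subst this
    exact h1A ha
  set A' : Finset ℕ := insert 1 (A.erase x) with hA'def
  have h1ne : (1 : ℕ) ∉ A.erase x := fun h => h1A (Finset.mem_of_mem_erase h)
  have hA'sub : A' ⊆ Finset.Icc 1 n := by
    intro a ha
    rcases Finset.mem_insert.1 ha with rfl | ha
    · have := Finset.mem_Icc.1 (hFsub A hA hxA)
      exact Finset.mem_Icc.2 ⟨le_refl 1, le_trans this.1 this.2⟩
    · exact hFsub A hA (Finset.mem_of_mem_erase ha)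
  have hsortA' : A'.sort (· ≤ ·) = 1 :: (A.erase x).sort (· ≤ ·) := by
    apply Finset.sort_insert
    · intro b hb
      exact le_trans (by norm_num) (hge2 b (Finset.mem_of_mem_erase hb))
    · exact h1ne
  have hsub : List.Sublist ((A.erase x).sort (· ≤ ·)) (A.sort (· ≤ ·)) := by
    apply List.sublist_of_subperm_of_pairwise _ (Finset.pairwise_sort _ _) (Finset.pairwise_sort _ _)
    apply List.subperm_of_subset (Finset.sort_nodup _ _)
    intro a ha
    simp only [Finset.mem_sort] at ha ⊢
    exact Finset.mem_of_mem_erase ha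
  have hlen : (A.sort (· ≤ ·)).length = ((A.erase x).sort (· ≤ ·)).length + 1 := by
    simp [Finset.length_sort, Finset.card_erase_of_mem hxA]
    have := Finset.card_pos.2 ⟨x, hxA⟩
    omega
  have hprec : prec A' A := by
    unfold prec
    rw [hsortA']
    cases hsA : A.sort (· ≤ ·) with
    | nil => rw [hsA] at hlen; simp at hlen
    | cons h t =>
      have hh : 1 ≤ h := by
        have : h ∈ A := (Finset.mem_sort (α := ℕ) (· ≤ ·)).1 (by rw [hsA]; simp)
        exact le_trans (by norm_num) (hge2 h this)
      have htail := listLem _ _ hsub (Finset.pairwise_sort _ _) hlen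
      rw [hsA] at htail
      exact List.Forall₂.cons hh htail
  have hA'F : A' ∈ F := hFinit A' A hA'sub hprec hA
  obtain ⟨y, hy⟩ := hcross A' hA'F B hB
  have hyA' : y ∈ A' := (Finset.mem_inter.1 hy).1
  have hyB : y ∈ B := (Finset.mem_inter.1 hy).2
  rcases Finset.mem_insert.1 hyA' with rfl | hy'
  · exact h1B hyB
  · have : y ∈ A ∩ B := Finset.mem_inter.2 ⟨Finset.mem_of_mem_erase hy', hyB⟩
    rw [hAB] at this
    exact (Finset.ne_of_mem_erase hy') (Finset.mem_singleton.1 this)
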